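/- Let P < Q be p-subgroups of the finite group G, let g ∈ G normalize both P and Q, and suppose Φ(Q) is not contained in P. Then: (1) P ⊔ Φ(Q) is a p-subgroup of G normalized by g with P < P ⊔ Φ(Q) < Q, i.e. P ⊔ Φ(Q) lies in the open interval (P,Q)_g = {R : P < R < Q, R a p-subgroup of G, g ∈ N_G(R)}; (2) for every R ∈ (P,Q)_g, the subgroup R ⊔ Φ(Q) again lies in (P,Q)_g; and (3) for every R ∈ (P,Q)_g one has R ≤ R ⊔ Φ(Q) and P ⊔ Φ(Q) ≤ R ⊔ Φ(Q). (These data constitute the conical contraction of (P,Q)_g used to prove that μ_g(P,Q) = 0 when Φ(Q) ≰ P.) -/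

import Mathlib

/-- Frattini subgroup of `Q`, regarded as a subgroup of `G`. -/
def frattiniIn {G : Type*} [Group G] (Q : Subgroup G) : Subgroup G :=
  (frattini ↥Q).map Q.subtype

lemma frattiniIn_le {G : Type*} [Group G] (Q : Subgroup G) : frattiniIn Q ≤ Q :=
  (Subgroup.map_le_range _ _).trans (le_of_eq Q.range_subtype)

lemma mem_frattiniIn {G : Type*} [Group G] (Q : Subgroup G) (h : ↥Q) :
    (h : G) ∈ frattiniIn Q ↔ h ∈ frattini ↥Q := by
  constructor
  · rintro ⟨x, hx, hxe⟩
    rwa [show x = h from Subtype.ext hxe] at hx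
  · intro hx; exact ⟨h, hx, rfl⟩

lemma normalizer_le_frattiniIn_normalizer {G : Type*} [Group G] (Q : Subgroup G) :
    Subgroup.normalizer (Q : Set G) ≤ Subgroup.normalizer ((frattiniIn Q : Subgroup G) : Set G) := by
  intro g hg
  set e : MulAut ↥Q := Q.normalizerMonoidHom ⟨g, hg⟩ with he
  have hmap : (frattini ↥Q).comap e.toMonoidHom = frattini ↥Q :=
    Subgroup.characteristic_iff_comap_eq.mp inferInstance e
  rw [Subgroup.mem_normalizer_iff]
  intro h
  constructor
  · rintro ⟨x, hx, rfl⟩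
    refine ⟨e x, ?_, rfl⟩
    rw [← hmap] at hx
    exact hx
  · intro hmem
    have hhQ : h ∈ Q := by
      have := frattiniIn_le Q hmem
      have := (hg h).mpr ?_
      · exact this
      · exact frattiniIn_le Q hmem
    have : (e ⟨h, hhQ⟩ : G) ∈ frattiniIn Q := by
      simp only [he, Subgroup.normalizerMonoidHom]
      exact hmem
    rw [mem_frattiniIn] at this
    have : (⟨h, hhQ⟩ : ↥Q) ∈ (frattini ↥Q).comap e.toMonoidHom := this
    rw [hmap] at this
    exact (mem_frattiniIn Q _).mpr this

lemma map_conj_eq_of_mem_normalizer {G : Type*} [Group G] {g : G} {A : Subgroup G}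
    (h : g ∈ Subgroup.normalizer (A : Set G)) : A.map (MulAut.conj g).toMonoidHom = A := by
  ext x
  rw [Subgroup.mem_map_equiv]
  have h1 := (Subgroup.mem_normalizer_iff.mp h) ((MulAut.conj g).symm x)
  simp only [MulAut.conj_symm_apply] at h1 ⊢
  rw [h1, show g * (g⁻¹ * x * g) * g⁻¹ = x from by group]

lemma mem_normalizer_sup {G : Type*} [Group G] {g : G} {A B : Subgroup G}
    (hA : g ∈ Subgroup.normalizer (A : Set G)) (hB : g ∈ Subgroup.normalizer (B : Set G)) : g ∈ Subgroup.normalizer ((A ⊔ B : Subgroup G) : Set G) := by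
  have hmap : (A ⊔ B).map (MulAut.conj g).toMonoidHom = A ⊔ B := by
    rw [Subgroup.map_sup, map_conj_eq_of_mem_normalizer hA, map_conj_eq_of_mem_normalizer hB]
  rw [Subgroup.mem_normalizer_iff]
  intro h
  conv_rhs => rw [show g * h * g⁻¹ = (MulAut.conj g) h by simp [MulAut.conj], ← hmap]
  rw [Subgroup.mem_map_equiv]
  simp only [MulAut.conj_symm_apply, MulAut.conj_apply]
  rw [show g⁻¹ * (g * h * g⁻¹) * g = h from by group]

lemma sup_frattiniIn_lt {G : Type*} [Group G] [Finite G] {Q R : Subgroup G} (h : R < Q) :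
    R ⊔ frattiniIn Q < Q := by
  have hle : R ⊔ frattiniIn Q ≤ Q := sup_le h.le (frattiniIn_le Q)
  refine lt_of_le_of_ne hle fun heq => ?_
  have h1 : R.subgroupOf Q ⊔ frattini ↥Q = ⊤ := by
    have h0 : (R ⊔ frattiniIn Q).subgroupOf Q = ⊤ := by
      rw [heq]; exact Subgroup.subgroupOf_self Q
    rw [Subgroup.subgroupOf_sup h.le (frattiniIn_le Q)] at h0
    rwa [show (frattiniIn Q).subgroupOf Q = frattini ↥Q from
      Subgroup.comap_map_eq_self_of_injective Q.subtype_injective _] at h0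
  have h2 := frattini_nongenerating h1
  have h3 : Q ≤ R := by
    intro x hx
    have : (⟨x, hx⟩ : ↥Q) ∈ R.subgroupOf Q := h2 ▸ Subgroup.mem_top _
    exact this
  exact h.not_ge h3

theorem stmt3 {G : Type*} [Group G] [Finite G] (p : ℕ) [Fact p.Prime]
    (P Q : Subgroup G) (hP : IsPGroup p P) (hQ : IsPGroup p Q) (hPQ : P < Q)
    (g : G) (hgP : g ∈ Subgroup.normalizer (P : Set G)) (hgQ : g ∈ Subgroup.normalizer (Q : Set G))
    (hFrat : ¬ frattiniIn Q ≤ P) :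
    (IsPGroup p (P ⊔ frattiniIn Q : Subgroup G) ∧ g ∈ Subgroup.normalizer ((P ⊔ frattiniIn Q : Subgroup G) : Set G) ∧
        P < P ⊔ frattiniIn Q ∧ P ⊔ frattiniIn Q < Q) ∧
    (∀ R : Subgroup G, IsPGroup p R → g ∈ Subgroup.normalizer (R : Set G) → P < R → R < Q →
      IsPGroup p (R ⊔ frattiniIn Q : Subgroup G) ∧ g ∈ Subgroup.normalizer ((R ⊔ frattiniIn Q : Subgroup G) : Set G) ∧
        P < R ⊔ frattiniIn Q ∧ R ⊔ frattiniIn Q < Q) ∧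
    (∀ R : Subgroup G, IsPGroup p R → g ∈ Subgroup.normalizer (R : Set G) → P < R → R < Q →
      R ≤ R ⊔ frattiniIn Q ∧ P ⊔ frattiniIn Q ≤ R ⊔ frattiniIn Q) := by
  have hΦnorm : g ∈ Subgroup.normalizer ((frattiniIn Q : Subgroup G) : Set G) := normalizer_le_frattiniIn_normalizer Q hgQ
  have key : ∀ R : Subgroup G, g ∈ Subgroup.normalizer (R : Set G) → R < Q →
      IsPGroup p (R ⊔ frattiniIn Q : Subgroup G) ∧ g ∈ Subgroup.normalizer ((R ⊔ frattiniIn Q : Subgroup G) : Set G) ∧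
        R ⊔ frattiniIn Q < Q := by
    intro R hgR hRQ
    have hlt := sup_frattiniIn_lt hRQ
    exact ⟨hQ.to_le hlt.le, mem_normalizer_sup hgR hΦnorm, hlt⟩
  constructor
  · obtain ⟨a, b, d⟩ := key P hgP hPQ
    exact ⟨a, b, lt_of_le_of_ne le_sup_left
      (fun heq => hFrat (le_sup_right.trans heq.ge)), d⟩
  refine ⟨fun R hpR hgR hPR hRQ => ?_, fun R hpR hgR hPR hRQ => ?_⟩
  · obtain ⟨a, b, d⟩ := key R hgR hRQ
    exact ⟨a, b, hPR.trans_le le_sup_left, d⟩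
  · exact ⟨le_sup_left, sup_le_sup_right hPR.le _⟩
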